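/- For a shape-regular quadrilateral K (h_K ≤ ϱρ_K), the coefficients of the bilinear map satisfy: ρ_K² < 4(a_1² + b_1²) < h_K², ρ_K² < 4(a_2² + b_2²) < h_K², and 4(a_12² + b_12²) < h_K²/4. -/

import Mathlib

open Metric Set

set_option maxHeartbeats 1000000

/-- The diameter of the largest circle inscribed in a plane set. -/
noncomputable def inscribedDiameter (s : Set (EuclideanSpace ℝ (Fin 2))) : ℝ :=
  sSup {d : ℝ | 0 ≤ d ∧ ∃ c, Metric.closedBall c (d / 2) ⊆ s}

private lemma dist_sq (a b : (EuclideanSpace ℝ (Fin 2))) :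
    dist a b ^ 2 = (a 0 - b 0) ^ 2 + (a 1 - b 1) ^ 2 := by
  rw [EuclideanSpace.dist_eq, Fin.sum_univ_two, Real.sq_sqrt (by positivity)]
  simp [Real.dist_eq, sq_abs]

private lemma hull_cross_nonneg (A B C x : (EuclideanSpace ℝ (Fin 2)))
    (hx : x ∈ convexHull ℝ ({A, B, C} : Set (EuclideanSpace ℝ (Fin 2))))
    (hC : 0 ≤ (B 0 - A 0) * (C 1 - A 1) - (B 1 - A 1) * (C 0 - A 0)) :
    0 ≤ (B 0 - A 0) * (x 1 - A 1) - (B 1 - A 1) * (x 0 - A 0) := by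
  have hconv : Convex ℝ {y : (EuclideanSpace ℝ (Fin 2)) |
      0 ≤ (B 0 - A 0) * (y 1 - A 1) - (B 1 - A 1) * (y 0 - A 0)} := by
    intro u hu v hv a b ha hb hab
    simp only [mem_setOf_eq] at hu hv ⊢
    have h0 : (a • u + b • v) 0 = a * u 0 + b * v 0 := rfl
    have h1 : (a • u + b • v) 1 = a * u 1 + b * v 1 := rfl
    rw [h0, h1]
    have hb' : b = 1 - a := by linarith
    subst hb'
    nlinarith [mul_nonneg ha hu, mul_nonneg hb hv]
  refine convexHull_min ?_ hconv hx
  intro y hy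
  simp only [mem_insert_iff, mem_singleton_iff] at hy
  rcases hy with rfl | rfl | rfl
  · simp only [mem_setOf_eq]; nlinarith []
  · simp only [mem_setOf_eq]; nlinarith []
  · simp only [mem_setOf_eq]; nlinarith [hC]

private lemma edge_bound (s : Set (EuclideanSpace ℝ (Fin 2))) (P Q c : (EuclideanSpace ℝ (Fin 2))) (r : ℝ) (hr : 0 ≤ r)
    (hball : closedBall c r ⊆ s)
    (hface : ∀ x ∈ s, 0 ≤ (Q 0 - P 0) * (x 1 - P 1) - (Q 1 - P 1) * (x 0 - P 0)) :
    r * dist P Q ≤ (Q 0 - P 0) * (c 1 - P 1) - (Q 1 - P 1) * (c 0 - P 0) := by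
  by_cases hm : dist P Q = 0
  · rw [hm, mul_zero]
    exact hface c (hball (mem_closedBall_self hr))
  · have hm0 : 0 < dist P Q := dist_nonneg.lt_of_ne' hm
    set t := r / dist P Q with ht
    have htn : 0 ≤ t := div_nonneg hr dist_nonneg
    set w : (EuclideanSpace ℝ (Fin 2)) := (EuclideanSpace.equiv (Fin 2) ℝ).symm ![-(Q 1 - P 1), Q 0 - P 0] with hw
    have hy0 : (c - t • w) 0 = c 0 - t * (-(Q 1 - P 1)) := rfl
    have hy1 : (c - t • w) 1 = c 1 - t * (Q 0 - P 0) := rfl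
    have hyc : dist (c - t • w) c ≤ r := by
      have h1 : dist (c - t • w) c ^ 2 = (t * dist P Q) ^ 2 := by
        rw [dist_sq, hy0, hy1, mul_pow, dist_sq P Q]; ring
      have h2 : t * dist P Q = r := by rw [ht]; field_simp
      nlinarith [dist_nonneg (x := c - t • w) (y := c)]
    have hfy := hface _ (hball (mem_closedBall.mpr hyc))
    have hexp : (Q 0 - P 0) * ((c - t • w) 1 - P 1) - (Q 1 - P 1) * ((c - t • w) 0 - P 0)
        = ((Q 0 - P 0) * (c 1 - P 1) - (Q 1 - P 1) * (c 0 - P 0))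
          - t * ((Q 0 - P 0) ^ 2 + (Q 1 - P 1) ^ 2) := by
      rw [hy0, hy1]; ring
    have hPQ2 : dist P Q ^ 2 = (Q 0 - P 0) ^ 2 + (Q 1 - P 1) ^ 2 := by
      rw [dist_sq P Q]; ring
    have htm : t * ((Q 0 - P 0) ^ 2 + (Q 1 - P 1) ^ 2) = r * dist P Q := by
      rw [← hPQ2, ht]; field_simp
    linarith [hexp, hfy, htm]

private lemma strict_tri (A B C : (EuclideanSpace ℝ (Fin 2)))
    (hcr : 0 < (B 0 - A 0) * (C 1 - A 1) - (B 1 - A 1) * (C 0 - A 0)) :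
    dist A C < dist A B + dist B C := by
  have hAB2 := dist_sq A B
  have hBC2 := dist_sq B C
  have hAC2 := dist_sq A C
  have hcr' : 0 < (B 0 - A 0) * (C 1 - B 1) - (B 1 - A 1) * (C 0 - B 0) := by linarith
  have hdot : (B 0 - A 0) * (C 0 - B 0) + (B 1 - A 1) * (C 1 - B 1)
      < dist A B * dist B C := by
    nlinarith [mul_pos hcr' hcr', hAB2, hBC2,
      mul_nonneg (dist_nonneg (x := A) (y := B)) (dist_nonneg (x := B) (y := C))]
  nlinarith [hdot, hAB2, hBC2, hAC2, dist_nonneg (x := A) (y := B),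
    dist_nonneg (x := B) (y := C), dist_nonneg (x := A) (y := C)]

private lemma tri_bound (A B C : (EuclideanSpace ℝ (Fin 2)))
    (hcr : 0 < (B 0 - A 0) * (C 1 - A 1) - (B 1 - A 1) * (C 0 - A 0)) :
    0 ≤ inscribedDiameter (convexHull ℝ ({A, B, C} : Set (EuclideanSpace ℝ (Fin 2)))) ∧
    dist A C * inscribedDiameter (convexHull ℝ ({A, B, C} : Set (EuclideanSpace ℝ (Fin 2)))) <
      (B 0 - A 0) * (C 1 - A 1) - (B 1 - A 1) * (C 0 - A 0) := by
  have hset1 : ({A, B, C} : Set (EuclideanSpace ℝ (Fin 2))) = {B, C, A} := by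
    ext z; simp only [mem_insert_iff, mem_singleton_iff]; tauto
  have hset2 : ({A, B, C} : Set (EuclideanSpace ℝ (Fin 2))) = {C, A, B} := by
    ext z; simp only [mem_insert_iff, mem_singleton_iff]; tauto
  have key : ∀ dd ∈ {d : ℝ | 0 ≤ d ∧ ∃ c, Metric.closedBall c (d / 2) ⊆
      convexHull ℝ ({A, B, C} : Set (EuclideanSpace ℝ (Fin 2)))},
      dd * (dist A B + dist B C + dist C A) ≤
        2 * ((B 0 - A 0) * (C 1 - A 1) - (B 1 - A 1) * (C 0 - A 0)) := by
    rintro dd ⟨hdd, c, hball⟩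
    have hr : (0:ℝ) ≤ dd / 2 := by linarith
    have e1 := edge_bound _ A B c (dd/2) hr hball
      (fun x hx => hull_cross_nonneg A B C x hx hcr.le)
    have e2 := edge_bound _ B C c (dd/2) hr hball
      (fun x hx => hull_cross_nonneg B C A x (by rw [← hset1]; exact hx) (by linarith))
    have e3 := edge_bound _ C A c (dd/2) hr hball
      (fun x hx => hull_cross_nonneg C A B x (by rw [← hset2]; exact hx) (by linarith))
    have hca : dist C A = dist A C := dist_comm C A
    nlinarith [e1, e2, e3]
  have hCA : A ≠ C := by
    intro h
    subst h
    linarith [hcr]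
  have hACpos : 0 < dist A C := dist_pos.mpr hCA
  have hstrict : 2 * dist A C < dist A B + dist B C + dist C A := by
    have h1 := strict_tri A B C hcr
    have hca : dist C A = dist A C := dist_comm C A
    linarith
  have hperpos : 0 < dist A B + dist B C + dist C A := by linarith
  have hmem0 : (0:ℝ) ∈ {d : ℝ | 0 ≤ d ∧ ∃ c, Metric.closedBall c (d / 2) ⊆
      convexHull ℝ ({A, B, C} : Set (EuclideanSpace ℝ (Fin 2)))} := by
    refine ⟨le_refl 0, A, ?_⟩
    have hz : (0:ℝ)/2 = 0 := by norm_num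
    rw [hz, Metric.closedBall_zero]
    exact singleton_subset_iff.mpr (subset_convexHull ℝ _ (mem_insert _ _))
  have hbdd : BddAbove {d : ℝ | 0 ≤ d ∧ ∃ c, Metric.closedBall c (d / 2) ⊆
      convexHull ℝ ({A, B, C} : Set (EuclideanSpace ℝ (Fin 2)))} := by
    refine ⟨2 * ((B 0 - A 0) * (C 1 - A 1) - (B 1 - A 1) * (C 0 - A 0)) /
      (dist A B + dist B C + dist C A), fun dd hdd => ?_⟩
    rw [le_div_iff₀ hperpos]
    exact key dd hdd
  have h0 : 0 ≤ inscribedDiameter (convexHull ℝ ({A, B, C} : Set (EuclideanSpace ℝ (Fin 2)))) :=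
    le_csSup hbdd hmem0
  have hsup : inscribedDiameter (convexHull ℝ ({A, B, C} : Set (EuclideanSpace ℝ (Fin 2)))) ≤
      2 * ((B 0 - A 0) * (C 1 - A 1) - (B 1 - A 1) * (C 0 - A 0)) /
      (dist A B + dist B C + dist C A) :=
    csSup_le ⟨0, hmem0⟩ (fun dd hdd => by
      rw [le_div_iff₀ hperpos]; exact key dd hdd)
  refine ⟨h0, ?_⟩
  have h2 : dist A C * inscribedDiameter (convexHull ℝ ({A, B, C} : Set (EuclideanSpace ℝ (Fin 2)))) ≤
      dist A C * (2 * ((B 0 - A 0) * (C 1 - A 1) - (B 1 - A 1) * (C 0 - A 0)) /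
      (dist A B + dist B C + dist C A)) :=
    mul_le_mul_of_nonneg_left hsup dist_nonneg
  have h3 : dist A C * (2 * ((B 0 - A 0) * (C 1 - A 1) - (B 1 - A 1) * (C 0 - A 0)) /
      (dist A B + dist B C + dist C A)) <
      (B 0 - A 0) * (C 1 - A 1) - (B 1 - A 1) * (C 0 - A 0) := by
    rw [mul_div_assoc', div_lt_iff₀ hperpos]
    nlinarith [mul_pos hcr (sub_pos.mpr hstrict)]
  linarith

private lemma norm_pos_of_cross {a0 a1 b0 b1 : ℝ} (h : 0 < a0 * b1 - a1 * b0) :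
    0 < a0 ^ 2 + a1 ^ 2 ∧ 0 < b0 ^ 2 + b1 ^ 2 := by
  constructor <;>
  nlinarith [sq_nonneg (a0*b0 + a1*b1), sq_nonneg a0, sq_nonneg a1, sq_nonneg b0,
    sq_nonneg b1, mul_pos h h]

private lemma sq_route {q h e : ℝ} (hq : 0 ≤ q) (hh : 0 < h)
    (h1 : q < e) (h2 : e ^ 2 ≤ h ^ 2 * q) : q < h ^ 2 := by
  rcases hq.eq_or_lt with h0 | h0
  · nlinarith
  · nlinarith

private lemma final_step {ρ L A B q : ℝ} (hρ : 0 ≤ ρ) (hL : 0 < L)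
    (hA : L * ρ < A) (hB : L * ρ < B) (hc : (A + B) ^ 2 ≤ q * L ^ 2) :
    4 * ρ ^ 2 < q := by
  have haux : 0 ≤ L * ρ := mul_nonneg hL.le hρ
  have h1 : 0 < A + B - 2 * (L * ρ) := by linarith
  have h2 : 0 < A + B + 2 * (L * ρ) := by linarith
  nlinarith [mul_pos h1 h2, mul_pos hL hL, hc]

private lemma upper1 (x0 x1 x2 x3 y0 y1 y2 y3 h : ℝ)
    (e10 : (x1-x0)^2+(y1-y0)^2 ≤ h^2) (e23 : (x2-x3)^2+(y2-y3)^2 ≤ h^2)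
    (d20 : (x2-x0)^2+(y2-y0)^2 ≤ h^2) (d31 : (x3-x1)^2+(y3-y1)^2 ≤ h^2)
    (hw : 0 < (x3-x0)^2+(y3-y0)^2) :
    (-x0+x1+x2-x3)^2 + (-y0+y1+y2-y3)^2 < 4*h^2 := by
  by_contra hc
  push_neg at hc
  linarith [sq_nonneg (x2-x1), sq_nonneg (y2-y1)]

private lemma lowerAux (x0 x1 x2 x3 y0 y1 y2 y3 ρ L : ℝ) (hρ : 0 ≤ ρ)
    (hL2 : L^2 = (x3-x1)^2+(y3-y1)^2) (hLpos : 0 < L)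
    (h3 : L * ρ < (x0-x3)*(y1-y3) - (y0-y3)*(x1-x3))
    (h1 : L * ρ < (x2-x1)*(y3-y1) - (y2-y1)*(x3-x1)) :
    4*ρ^2 < (-x0+x1+x2-x3)^2 + (-y0+y1+y2-y3)^2 ∧
    4*ρ^2 < (-x0-x1+x2+x3)^2 + (-y0-y1+y2+y3)^2 := by
  constructor
  · refine final_step hρ hLpos h3 h1 ?_
    rw [hL2]
    linarith [sq_nonneg ((-x0+x1+x2-x3)*(x3-x1) + (-y0+y1+y2-y3)*(y3-y1))]
  · refine final_step hρ hLpos h3 h1 ?_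
    rw [hL2]
    linarith [sq_nonneg ((-x0-x1+x2+x3)*(x3-x1) + (-y0-y1+y2+y3)*(y3-y1))]

private lemma pos_factor {c t : ℝ} (hc : 0 < c) (h : c * t ≤ 0) : t ≤ 0 := by
  nlinarith

private lemma upper12 (x0 x1 x2 x3 y0 y1 y2 y3 h : ℝ) (hh : 0 < h)
    (hc0 : 0 < (x1-x0)*(y2-y1) - (y1-y0)*(x2-x1))
    (hc1 : 0 < (x2-x1)*(y3-y2) - (y2-y1)*(x3-x2))
    (hc2 : 0 < (x3-x2)*(y0-y3) - (y3-y2)*(x0-x3))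
    (hc3 : 0 < (x0-x3)*(y1-y0) - (y0-y3)*(x1-x0))
    (e01 : (x0-x1)^2+(y0-y1)^2 ≤ h^2) (e23 : (x2-x3)^2+(y2-y3)^2 ≤ h^2)
    (e21 : (x2-x1)^2+(y2-y1)^2 ≤ h^2) (e03 : (x0-x3)^2+(y0-y3)^2 ≤ h^2) :
    (x0-x1+x2-x3)^2 + (y0-y1+y2-y3)^2 < h^2 := by
  obtain ⟨Dx, hDx⟩ : ∃ t, t = x0-x1+x2-x3 := ⟨_, rfl⟩
  obtain ⟨Dy, hDy⟩ : ∃ t, t = y0-y1+y2-y3 := ⟨_, rfl⟩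
  obtain ⟨P0, hP0⟩ : ∃ t, t = x0*Dx + y0*Dy := ⟨_, rfl⟩
  obtain ⟨P1, hP1⟩ : ∃ t, t = x1*Dx + y1*Dy := ⟨_, rfl⟩
  obtain ⟨P2, hP2⟩ : ∃ t, t = x2*Dx + y2*Dy := ⟨_, rfl⟩
  obtain ⟨P3, hP3⟩ : ∃ t, t = x3*Dx + y3*Dy := ⟨_, rfl⟩
  rw [← hDx, ← hDy]
  have hq : 0 ≤ Dx^2 + Dy^2 := by positivity
  have hS : Dx^2 + Dy^2 = P0 - P1 + P2 - P3 := by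
    simp only [hP0, hP1, hP2, hP3, hDx, hDy]; ring
  rcases lt_or_ge P0 P1 with h01 | h01
  · refine sq_route hq hh (e := P2 - P3) (by linarith) ?_
    have hcau : (P2 - P3)^2 ≤ ((x2-x3)^2+(y2-y3)^2) * (Dx^2+Dy^2) := by
      simp only [hP2, hP3]
      nlinarith [sq_nonneg ((x2-x3)*Dy - (y2-y3)*Dx)]
    linarith [hcau, mul_le_mul_of_nonneg_right e23 hq]
  rcases lt_or_ge P2 P3 with h23 | h23
  · refine sq_route hq hh (e := P0 - P1) (by linarith) ?_
    have hcau : (P0 - P1)^2 ≤ ((x0-x1)^2+(y0-y1)^2) * (Dx^2+Dy^2) := by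
      simp only [hP0, hP1]
      nlinarith [sq_nonneg ((x0-x1)*Dy - (y0-y1)*Dx)]
    linarith [hcau, mul_le_mul_of_nonneg_right e01 hq]
  rcases lt_or_ge P0 P3 with h03 | h03
  · refine sq_route hq hh (e := P2 - P1) (by linarith) ?_
    have hcau : (P2 - P1)^2 ≤ ((x2-x1)^2+(y2-y1)^2) * (Dx^2+Dy^2) := by
      simp only [hP2, hP1]
      nlinarith [sq_nonneg ((x2-x1)*Dy - (y2-y1)*Dx)]
    linarith [hcau, mul_le_mul_of_nonneg_right e21 hq]
  rcases lt_or_ge P2 P1 with h21 | h21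
  · refine sq_route hq hh (e := P0 - P3) (by linarith) ?_
    have hcau : (P0 - P3)^2 ≤ ((x0-x3)^2+(y0-y3)^2) * (Dx^2+Dy^2) := by
      simp only [hP0, hP3]
      nlinarith [sq_nonneg ((x0-x3)*Dy - (y0-y3)*Dx)]
    linarith [hcau, mul_le_mul_of_nonneg_right e03 hq]
  -- pattern case: P1 ≤ P0, P3 ≤ P2, P3 ≤ P0, P1 ≤ P2
  have idh : ((x2-x1)*(y3-y2) - (y2-y1)*(x3-x2)) * P0
      + ((x0-x3)*(y1-y0) - (y0-y3)*(x1-x0)) * P2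
      - ((x3-x2)*(y0-y3) - (y3-y2)*(x0-x3)) * P1
      - ((x1-x0)*(y2-y1) - (y1-y0)*(x2-x1)) * P3 = 0 := by
    simp only [hP0, hP1, hP2, hP3]; ring
  have hq0 : Dx^2 + Dy^2 ≤ 0 := by
    rcases le_total P3 P1 with h31 | h31
    · have m1 : 0 ≤ ((x0-x3)*(y1-y0) - (y0-y3)*(x1-x0)) * (P2 - P1) :=
        mul_nonneg hc3.le (by linarith)
      have m2 : 0 ≤ ((x1-x0)*(y2-y1) - (y1-y0)*(x2-x1)) * (P1 - P3) :=
        mul_nonneg hc0.le (by linarith)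
      have m0 : 0 ≤ ((x2-x1)*(y3-y2) - (y2-y1)*(x3-x2)) * (P0 - P1) :=
        mul_nonneg hc1.le (by linarith)
      have z0 : ((x2-x1)*(y3-y2) - (y2-y1)*(x3-x2)) * (P0 - P1) ≤ 0 := by
        linarith [idh, m1, m2]
      have z1 : ((x0-x3)*(y1-y0) - (y0-y3)*(x1-x0)) * (P2 - P1) ≤ 0 := by
        linarith [idh, m0, m2]
      have z2 : ((x1-x0)*(y2-y1) - (y1-y0)*(x2-x1)) * (P1 - P3) ≤ 0 := by
        linarith [idh, m0, m1]
      have w0 : P0 - P1 ≤ 0 := pos_factor hc1 z0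
      have w1 : P2 - P1 ≤ 0 := pos_factor hc3 z1
      have w2 : P1 - P3 ≤ 0 := pos_factor hc0 z2
      linarith [hS]
    · have m0 : 0 ≤ ((x2-x1)*(y3-y2) - (y2-y1)*(x3-x2)) * (P0 - P3) :=
        mul_nonneg hc1.le (by linarith)
      have m1 : 0 ≤ ((x0-x3)*(y1-y0) - (y0-y3)*(x1-x0)) * (P2 - P3) :=
        mul_nonneg hc3.le (by linarith)
      have m2 : 0 ≤ ((x3-x2)*(y0-y3) - (y3-y2)*(x0-x3)) * (P3 - P1) :=
        mul_nonneg hc2.le (by linarith)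
      have z0 : ((x2-x1)*(y3-y2) - (y2-y1)*(x3-x2)) * (P0 - P3) ≤ 0 := by
        linarith [idh, m1, m2]
      have z1 : ((x0-x3)*(y1-y0) - (y0-y3)*(x1-x0)) * (P2 - P3) ≤ 0 := by
        linarith [idh, m0, m2]
      have z2 : ((x3-x2)*(y0-y3) - (y3-y2)*(x0-x3)) * (P3 - P1) ≤ 0 := by
        linarith [idh, m0, m1]
      have w0 : P0 - P3 ≤ 0 := pos_factor hc1 z0
      have w1 : P2 - P3 ≤ 0 := pos_factor hc3 z1
      have w2 : P3 - P1 ≤ 0 := pos_factor hc2 z2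
      linarith [hS]
  linarith [pow_pos hh 2]

/-- For a shape-regular convex quadrilateral `K` (with `h_K ≤ ϱ ρ_K`), the coefficients of the
bilinear map satisfy `ρ_K² < 4(a1² + b1²) < h_K²`, `ρ_K² < 4(a2² + b2²) < h_K²`, and
`4(a12² + b12²) < h_K²/4`. -/
theorem bilinear_coefficient_bounds
    (Z : Fin 4 → EuclideanSpace ℝ (Fin 2)) (ϱ : ℝ) (hϱ : 2 < ϱ)
    -- the vertices are in convex (counterclockwise) cyclic position
    (hconvex : ∀ i : Fin 4,
      0 < (Z (i+1) 0 - Z i 0) * (Z (i+2) 1 - Z (i+1) 1)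
          - (Z (i+1) 1 - Z i 1) * (Z (i+2) 0 - Z (i+1) 0))
    (hK ρK : ℝ)
    (hhK : hK = Metric.diam (convexHull ℝ (Set.range Z)))
    (hρK : ρK = ⨅ i : Fin 4, inscribedDiameter (convexHull ℝ {Z (i-1), Z i, Z (i+1)}))
    (hreg : hK ≤ ϱ * ρK)
    (a1 a2 a12 b1 b2 b12 : ℝ)
    (ha1 : a1 = (-(Z 0 0) + Z 1 0 + Z 2 0 - Z 3 0) / 4)
    (ha2 : a2 = (-(Z 0 0) - Z 1 0 + Z 2 0 + Z 3 0) / 4)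
    (ha12 : a12 = (Z 0 0 - Z 1 0 + Z 2 0 - Z 3 0) / 4)
    (hb1 : b1 = (-(Z 0 1) + Z 1 1 + Z 2 1 - Z 3 1) / 4)
    (hb2 : b2 = (-(Z 0 1) - Z 1 1 + Z 2 1 + Z 3 1) / 4)
    (hb12 : b12 = (Z 0 1 - Z 1 1 + Z 2 1 - Z 3 1) / 4) :
    (ρK ^ 2 < 4 * (a1 ^ 2 + b1 ^ 2) ∧ 4 * (a1 ^ 2 + b1 ^ 2) < hK ^ 2) ∧
    (ρK ^ 2 < 4 * (a2 ^ 2 + b2 ^ 2) ∧ 4 * (a2 ^ 2 + b2 ^ 2) < hK ^ 2) ∧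
    4 * (a12 ^ 2 + b12 ^ 2) < hK ^ 2 / 4 := by
  subst ha1 hb1 ha2 hb2 ha12 hb12
  have c0 : 0 < (Z 1 0 - Z 0 0) * (Z 2 1 - Z 1 1) - (Z 1 1 - Z 0 1) * (Z 2 0 - Z 1 0) :=
    hconvex 0
  have c1 : 0 < (Z 2 0 - Z 1 0) * (Z 3 1 - Z 2 1) - (Z 2 1 - Z 1 1) * (Z 3 0 - Z 2 0) :=
    hconvex 1
  have c2 : 0 < (Z 3 0 - Z 2 0) * (Z 0 1 - Z 3 1) - (Z 3 1 - Z 2 1) * (Z 0 0 - Z 3 0) :=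
    hconvex 2
  have c3 : 0 < (Z 0 0 - Z 3 0) * (Z 1 1 - Z 0 1) - (Z 0 1 - Z 3 1) * (Z 1 0 - Z 0 0) :=
    hconvex 3
  have hbddK : Bornology.IsBounded (convexHull ℝ (Set.range Z)) :=
    ((Set.finite_range Z).isCompact_convexHull ℝ).isBounded
  have hd : ∀ i j : Fin 4, (Z i 0 - Z j 0)^2 + (Z i 1 - Z j 1)^2 ≤ hK^2 := by
    intro i j
    have h1 : dist (Z i) (Z j) ≤ hK := by
      rw [hhK]
      exact Metric.dist_le_diam_of_mem hbddK
        (subset_convexHull ℝ _ (Set.mem_range_self i))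
        (subset_convexHull ℝ _ (Set.mem_range_self j))
    have h2 := dist_sq (Z i) (Z j)
    nlinarith [dist_nonneg (x := Z i) (y := Z j)]
  have hKnn : 0 ≤ hK := by rw [hhK]; exact Metric.diam_nonneg
  have hK0 : 0 < hK := by
    have hp := (norm_pos_of_cross c0).1
    nlinarith [hd 1 0]
  have t0 := tri_bound (Z 3) (Z 0) (Z 1) (by linarith [c3])
  have t1 := tri_bound (Z 0) (Z 1) (Z 2) (by linarith [c0])
  have t2 := tri_bound (Z 1) (Z 2) (Z 3) (by linarith [c1])
  have t3 := tri_bound (Z 2) (Z 3) (Z 0) (by linarith [c2])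
  have hbb : BddBelow (Set.range fun i : Fin 4 =>
      inscribedDiameter (convexHull ℝ {Z (i-1), Z i, Z (i+1)})) := by
    refine ⟨0, ?_⟩
    rintro x ⟨i, rfl⟩
    fin_cases i
    · exact t0.1
    · exact t1.1
    · exact t2.1
    · exact t3.1
  have hρ0 : 0 ≤ ρK := by
    rw [hρK]
    refine le_ciInf fun i => ?_
    fin_cases i
    · exact t0.1
    · exact t1.1
    · exact t2.1
    · exact t3.1
  have hρT0 : ρK ≤ inscribedDiameter (convexHull ℝ ({Z 3, Z 0, Z 1} :
      Set (EuclideanSpace ℝ (Fin 2)))) := by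
    rw [hρK]; exact ciInf_le hbb 0
  have hρT2 : ρK ≤ inscribedDiameter (convexHull ℝ ({Z 1, Z 2, Z 3} :
      Set (EuclideanSpace ℝ (Fin 2)))) := by
    rw [hρK]; exact ciInf_le hbb 2
  have L2 := dist_sq (Z 3) (Z 1)
  have hLpos : 0 < dist (Z 3) (Z 1) := by
    have hp := (norm_pos_of_cross (show 0 < (Z 2 0 - Z 1 0) * (Z 3 1 - Z 1 1)
      - (Z 2 1 - Z 1 1) * (Z 3 0 - Z 1 0) by linarith [c1])).2
    nlinarith [L2, dist_nonneg (x := Z 3) (y := Z 1)]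
  have h3 : dist (Z 3) (Z 1) * ρK <
      (Z 0 0 - Z 3 0) * (Z 1 1 - Z 3 1) - (Z 0 1 - Z 3 1) * (Z 1 0 - Z 3 0) := by
    have hm := mul_le_mul_of_nonneg_left hρT0 (dist_nonneg (x := Z 3) (y := Z 1))
    linarith [t0.2, hm]
  have h1' : dist (Z 3) (Z 1) * ρK <
      (Z 2 0 - Z 1 0) * (Z 3 1 - Z 1 1) - (Z 2 1 - Z 1 1) * (Z 3 0 - Z 1 0) := by
    rw [show dist (Z 3) (Z 1) = dist (Z 1) (Z 3) from dist_comm _ _]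
    have hm := mul_le_mul_of_nonneg_left hρT2 (dist_nonneg (x := Z 1) (y := Z 3))
    linarith [t2.2, hm]
  have hlow := lowerAux (Z 0 0) (Z 1 0) (Z 2 0) (Z 3 0) (Z 0 1) (Z 1 1) (Z 2 1) (Z 3 1)
    ρK (dist (Z 3) (Z 1)) hρ0 (by linarith [L2]) hLpos h3 h1'
  have hu1 := upper1 (Z 0 0) (Z 1 0) (Z 2 0) (Z 3 0) (Z 0 1) (Z 1 1) (Z 2 1) (Z 3 1) hK
    (hd 1 0) (hd 2 3) (hd 2 0) (hd 3 1) (by linarith [(norm_pos_of_cross c3).1])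
  have hu2 := upper1 (Z 1 0) (Z 2 0) (Z 3 0) (Z 0 0) (Z 1 1) (Z 2 1) (Z 3 1) (Z 0 1) hK
    (hd 2 1) (hd 3 0) (hd 3 1) (hd 0 2) (by linarith [(norm_pos_of_cross c0).1])
  have hq12 := upper12 (Z 0 0) (Z 1 0) (Z 2 0) (Z 3 0) (Z 0 1) (Z 1 1) (Z 2 1) (Z 3 1) hK
    hK0 c0 c1 c2 c3 (hd 0 1) (hd 2 3) (hd 2 1) (hd 0 3)
  refine ⟨⟨?_, ?_⟩, ⟨?_, ?_⟩, ?_⟩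
  · linarith [hlow.1]
  · linarith [hu1]
  · linarith [hlow.2]
  · linarith [hu2]
  · linarith [hq12]
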